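/- Let A be a unital C*-algebra, a ∈ A not invertible, and u ∈ A unitary. If ‖a − u‖ < β, then β > 1 and a + (β−1)u is invertible in A; consequently dist(a, U(A)) ≥ 1 + dist(a, A⁻¹). -/
import Mathlib

theorem aux_stmt_12 {A : Type*} [NormedRing A] [StarRing A] [CStarRing A] [CompleteSpace A]
    [NormedAlgebra ℂ A] [StarModule ℂ A]
    (a : A) (hnu : ¬ IsUnit a) (u : A) (hu : u ∈ unitary A) (β : ℝ) (hb : ‖a - u‖ < β) :
    1 < β ∧ IsUnit (a + (((β - 1 : ℝ) : ℂ)) • u) := by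
  rcases subsingleton_or_nontrivial A with h | h
  · exact absurd (isUnit_of_subsingleton a) hnu
  have hsu : star u * u = 1 := (Unitary.mem_iff.mp hu).1
  have hus : u * star u = 1 := (Unitary.mem_iff.mp hu).2
  have huu : IsUnit u := ⟨⟨u, star u, hus, hsu⟩, rfl⟩
  set x := star u * (a - u) with hx
  have hxnorm : ‖x‖ ≤ ‖a - u‖ := by
    calc ‖x‖ ≤ ‖star u‖ * ‖a - u‖ := norm_mul_le _ _
    _ = ‖a - u‖ := by
        rw [norm_star, CStarRing.norm_of_mem_unitary hu, one_mul]
  have hβ1 : 1 < β := by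
    by_contra hβ
    push_neg at hβ
    have hx1 : ‖x‖ < 1 := lt_of_le_of_lt hxnorm (lt_of_lt_of_le hb hβ)
    have hunit1 : IsUnit (1 + x) := by
      have := (Units.oneSub (-x) (by simpa using hx1)).isUnit
      simpa [sub_neg_eq_add] using this
    have hfac : u * (1 + x) = a := by
      rw [mul_add, mul_one, hx, ← mul_assoc, hus, one_mul]
      abel
    exact hnu (hfac ▸ huu.mul hunit1)
  refine ⟨hβ1, ?_⟩
  have hβ0 : (0:ℝ) < β := by linarith
  have hβne : ((β : ℝ) : ℂ) ≠ 0 := by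
    simpa using hβ0.ne'
  have hx1 : ‖((β : ℝ) : ℂ)⁻¹ • x‖ < 1 := by
    rw [norm_smul, norm_inv, Complex.norm_real, Real.norm_eq_abs, abs_of_pos hβ0]
    have h1 : ‖x‖ < β := lt_of_le_of_lt hxnorm hb
    rw [inv_mul_lt_iff₀ hβ0, mul_one]
    exact h1
  have hunit1 : IsUnit (1 + ((β : ℝ) : ℂ)⁻¹ • x) := by
    have := (Units.oneSub (-(((β : ℝ) : ℂ)⁻¹ • x)) (by simpa using hx1)).isUnit
    simpa [sub_neg_eq_add] using this
  have hunit2 : IsUnit (((β : ℝ) : ℂ) • (1 + ((β : ℝ) : ℂ)⁻¹ • x)) := by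
    rw [Algebra.smul_def]
    exact ((isUnit_iff_ne_zero.mpr hβne).map (algebraMap ℂ A)).mul hunit1
  have hsc : (((β : ℝ) : ℂ)) • (1 + ((β : ℝ) : ℂ)⁻¹ • x) = ((β : ℝ) : ℂ) • 1 + x := by
    rw [smul_add, smul_smul, mul_inv_cancel₀ hβne, one_smul]
  rw [hsc] at hunit2
  have hfac : u * (((β : ℝ) : ℂ) • 1 + x) = a + (((β - 1 : ℝ) : ℂ)) • u := by
    rw [mul_add, mul_smul_comm, mul_one, hx, ← mul_assoc, hus, one_mul]
    push_cast
    module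
  exact hfac ▸ huu.mul hunit2

theorem stmt_12 {A : Type*} [NormedRing A] [StarRing A] [CStarRing A] [CompleteSpace A]
    [NormedAlgebra ℂ A] [StarModule ℂ A]
    (a : A) (hnu : ¬ IsUnit a) (u : A) (hu : u ∈ unitary A) (β : ℝ) (hb : ‖a - u‖ < β) :
    1 < β ∧ IsUnit (a + (((β - 1 : ℝ) : ℂ)) • u) ∧
      1 + Metric.infDist a {x : A | IsUnit x} ≤ Metric.infDist a (unitary A : Set A) := by
  obtain ⟨hβ1, hunit⟩ := aux_stmt_12 a hnu u hu β hb
  rcases subsingleton_or_nontrivial A with h | h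
  · exact absurd (isUnit_of_subsingleton a) hnu
  refine ⟨hβ1, hunit, ?_⟩
  have key : ∀ v ∈ unitary A, 1 + Metric.infDist a {x : A | IsUnit x} ≤ dist a v := by
    intro v hv
    have hd : dist a v = ‖a - v‖ := dist_eq_norm a v
    have hle : ∀ ε > (0:ℝ), Metric.infDist a {x : A | IsUnit x} ≤ (‖a - v‖ - 1) + ε := by
      intro ε hε
      set γ := ‖a - v‖ + ε with hγ
      obtain ⟨hγ1, hγu⟩ := aux_stmt_12 a hnu v hv γ (by simp [hγ]; linarith)
      have hmem : a + (((γ - 1 : ℝ) : ℂ)) • v ∈ {x : A | IsUnit x} := hγu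
      calc Metric.infDist a {x : A | IsUnit x}
          ≤ dist a (a + (((γ - 1 : ℝ) : ℂ)) • v) := Metric.infDist_le_dist_of_mem hmem
        _ = ‖(((γ - 1 : ℝ) : ℂ)) • v‖ := by
            rw [dist_eq_norm]; simp
        _ = (γ - 1) * ‖v‖ := by
            rw [norm_smul, Complex.norm_real, Real.norm_eq_abs,
              abs_of_pos (by linarith : (0:ℝ) < γ - 1)]
        _ = γ - 1 := by rw [CStarRing.norm_of_mem_unitary hv, mul_one]
        _ = (‖a - v‖ - 1) + ε := by rw [hγ]; ring
    have := le_of_forall_pos_le_add hle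
    linarith [hd ▸ this]
  have hne : Nonempty (unitary A : Set A) := ⟨⟨1, one_mem _⟩⟩
  conv_rhs => rw [Metric.infDist_eq_iInf]
  exact le_ciInf fun (v : (unitary A : Set A)) => key v.1 v.2
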